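/- Let λ ≥ 0 and let X be a spike prior. Let Q_n = GWig_n(λ, X) and P_n = GWig_n(0). Then the second moment satisfies the identity ∫ (dQ_n/dP_n)² dP_n = E_{x,x'} exp((nλ²/2)⟨x,x'⟩²), where x and x' are drawn independently from X_n (the identity holds as an equality in [0,∞]). -/

import Mathlib

open MeasureTheory ProbabilityTheory Filter Topology ENNReal

noncomputable section

/-- Contiguity of a sequence of measures: `Q ◁ P`. -/
def Contiguous {Ω : ℕ → Type} [∀ n, MeasurableSpace (Ω n)]
    (Q P : ∀ n, Measure (Ω n)) : Prop :=
  ∀ A : ∀ n, Set (Ω n), (∀ n, MeasurableSet (A n)) →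
    Tendsto (fun n => P n (A n)) atTop (𝓝 0) →
    Tendsto (fun n => Q n (A n)) atTop (𝓝 0)

/-- A spike prior: a family of probability measures on ℝⁿ with ‖x‖ → 1 in probability. -/
structure SpikePrior where
  μ : ∀ n : ℕ, Measure (EuclideanSpace ℝ (Fin n))
  isProb : ∀ n, IsProbabilityMeasure (μ n)
  norm_tendsto_one : ∀ ε : ℝ, 0 < ε →
    Tendsto (fun n => μ n {x | ε < |‖x‖ - 1|}) atTop (𝓝 0)

/-- The second moment `E_{x,x'} exp((n λ²/2) ⟨x,x'⟩²)` (valued in `[0,∞]`). -/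
def wignerSecondMoment (μ : ∀ n : ℕ, Measure (EuclideanSpace ℝ (Fin n)))
    (lam : ℝ) (n : ℕ) : ℝ≥0∞ :=
  ∫⁻ p, ENNReal.ofReal (Real.exp ((n * lam ^ 2 / 2) * (inner ℝ p.1 p.2 : ℝ) ^ 2))
    ∂((μ n).prod (μ n))

/-- Wigner noise matrix: symmetric, entries independent up to symmetry, off-diagonal `P`,
diagonal `Pd`. -/
def wignerNoise (P Pd : Measure ℝ) (n : ℕ) : Measure (Fin n → Fin n → ℝ) :=
  (Measure.pi fun p : Fin n × Fin n => if p.1 = p.2 then Pd else P).map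
    (fun g i j => if i ≤ j then g (i, j) else g (j, i))

/-- The general spiked Wigner model `Wig(λ, P, Pd, μ)`: law of `λ x xᵀ + n^{-1/2} W`. -/
def spikedWigner (lam : ℝ) (P Pd : Measure ℝ) {n : ℕ}
    (μ : Measure (EuclideanSpace ℝ (Fin n))) : Measure (Fin n → Fin n → ℝ) :=
  (μ.prod (wignerNoise P Pd n)).map
    (fun q i j => lam * (q.1 i * q.1 j) + (Real.sqrt n)⁻¹ * q.2 i j)

/-- The unspiked Wigner model `Wig(0, P, Pd)`: law of `n^{-1/2} W`. -/
def unspikedWigner (P Pd : Measure ℝ) (n : ℕ) : Measure (Fin n → Fin n → ℝ) :=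
  (wignerNoise P Pd n).map (fun W i j => (Real.sqrt n)⁻¹ * W i j)

/-- Spiked Gaussian Wigner model `GWig(λ, μ)` (GOE noise). -/
def GWig (lam : ℝ) {n : ℕ} (μ : Measure (EuclideanSpace ℝ (Fin n))) :
    Measure (Fin n → Fin n → ℝ) :=
  spikedWigner lam (gaussianReal 0 1) (gaussianReal 0 2) μ

/-- Unspiked Gaussian Wigner model `GWig(0)`. -/
def GWig0 (n : ℕ) : Measure (Fin n → Fin n → ℝ) :=
  unspikedWigner (gaussianReal 0 1) (gaussianReal 0 2) n

/-- A real random variable `Z` on `(Ω, μ)` is `s2`-subgaussian. -/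
def IsSubgaussian {Ω : Type} [MeasurableSpace Ω] (μ : Measure Ω) (Z : Ω → ℝ) (s2 : ℝ) : Prop :=
  Integrable Z μ ∧ (∫ ω, Z ω ∂μ) = 0 ∧
    ∀ v : ℝ, ∫⁻ ω, ENNReal.ofReal (Real.exp (v * Z ω)) ∂μ
      ≤ ENNReal.ofReal (Real.exp (s2 * v ^ 2 / 2))

/-- An ℝⁿ-valued random variable (given by its law `μ`) is `s2`-subgaussian. -/
def IsSubgaussianVec {n : ℕ} (μ : Measure (EuclideanSpace ℝ (Fin n))) (s2 : ℝ) : Prop :=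
  Integrable id μ ∧ (∫ x, x ∂μ) = 0 ∧
    ∀ v : EuclideanSpace ℝ (Fin n),
      ∫⁻ x, ENNReal.ofReal (Real.exp ((inner ℝ v x : ℝ))) ∂μ
        ≤ ENNReal.ofReal (Real.exp (s2 * ‖v‖ ^ 2 / 2))

/-- `λ*_X`: the supremum of λ ≥ 0 for which the Wigner second moment stays bounded. -/
def lamStar (μ : ∀ n : ℕ, Measure (EuclideanSpace ℝ (Fin n))) : ℝ :=
  sSup {lam : ℝ | 0 ≤ lam ∧
    ∃ B : ℝ≥0∞, B ≠ ⊤ ∧ ∀ n, wignerSecondMoment μ lam n ≤ B}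

/-- Standard Gaussian on `EuclideanSpace ℝ (Fin n)`. -/
def stdGaussianE (n : ℕ) : Measure (EuclideanSpace ℝ (Fin n)) :=
  (Measure.pi fun _ : Fin n => gaussianReal 0 1).map
    (fun y => (WithLp.equiv 2 (Fin n → ℝ)).symm y)

/-- The square root of a positive semidefinite matrix, as `Matrix.PosSemidef.sqrt` was defined
in Mathlib (Dec 2024). -/
def Matrix.PosSemidef.sqrt {n : Type*} [Fintype n] [DecidableEq n]
    {A : Matrix n n ℝ} (hA : A.PosSemidef) : Matrix n n ℝ :=
  (hA.1.eigenvectorUnitary : Matrix n n ℝ) *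
    Matrix.diagonal ((fun x : ℝ => Real.sqrt x) ∘ hA.1.eigenvalues) *
    (star hA.1.eigenvectorUnitary : Matrix n n ℝ)

open scoped Classical in
/-- Centered multivariate Gaussian `N(0, S)` (zero measure when `S` is not psd). -/
def gaussianCov {n : ℕ} (S : Matrix (Fin n) (Fin n) ℝ) : Measure (EuclideanSpace ℝ (Fin n)) :=
  if h : S.PosSemidef then
    (stdGaussianE n).map
      (fun w => (WithLp.equiv 2 (Fin n → ℝ)).symm (h.sqrt.mulVec (fun i => w i)))
  else 0

/-- The spiked Wishart model: the joint law of `N` i.i.d. samples from `N(0, I + β x xᵀ)`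
with `x ~ μ`. -/
def wishartSpiked (β : ℝ) {n : ℕ} (μ : Measure (EuclideanSpace ℝ (Fin n))) (N : ℕ) :
    Measure (Fin N → EuclideanSpace ℝ (Fin n)) :=
  μ.bind (fun x => Measure.pi fun _ : Fin N =>
    gaussianCov (1 + β • Matrix.vecMulVec (fun i => x i) (fun i => x i)))

/-- The unspiked Wishart model: `N` i.i.d. samples from `N(0, I)`. -/
def wishartNull (n N : ℕ) : Measure (Fin N → EuclideanSpace ℝ (Fin n)) :=
  Measure.pi fun _ : Fin N => stdGaussianE n

/-- The i.i.d. spike prior `iid(π/√n)`. -/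
def iidPrior (π : Measure ℝ) (n : ℕ) : Measure (EuclideanSpace ℝ (Fin n)) :=
  (Measure.pi fun _ : Fin n => π).map
    (fun y => (WithLp.equiv 2 (Fin n → ℝ)).symm (fun i => y i / Real.sqrt n))

/-- `f` is a rate function for the prior `μ`. -/
def IsRateFunction (μ : ∀ n : ℕ, Measure (EuclideanSpace ℝ (Fin n))) (f : ℝ → ℝ) : Prop :=
  (∀ t ∈ Set.Ico (0:ℝ) 1, 0 ≤ f t) ∧
  ∃ b : ℕ → ℝ → ℝ,
    (∀ n : ℕ, ∀ t ∈ Set.Ico (0:ℝ) 1,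
      b n t ≤ -(1 / (n:ℝ)) *
        Real.log ((((μ n).prod (μ n)) {p | t ≤ |(inner ℝ p.1 p.2 : ℝ)|}).toReal)) ∧
    TendstoUniformlyOn b f atTop (Set.Ico 0 1)

/-- The rate function `f` admits a local Chernoff bound for the prior `μ`. -/
def HasLocalChernoff (μ : ∀ n : ℕ, Measure (EuclideanSpace ℝ (Fin n))) (f : ℝ → ℝ) : Prop :=
  ∃ T : ℝ, 0 < T ∧ ∃ C : ℝ, 0 < C ∧ ∀ n : ℕ, ∀ t ∈ Set.Icc (0:ℝ) T,
    ((μ n).prod (μ n)) {p | t ≤ |(inner ℝ p.1 p.2 : ℝ)|}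
      ≤ ENNReal.ofReal (C * Real.exp (-(n:ℝ) * f t))

/-- The function `F(β,t)` appearing in the Wishart lower bound (Theorem 5.9). -/
def wishartF (β t : ℝ) : ℝ :=
  (1 + β) * (t * ((Real.sqrt (((1 - t ^ 2) / (2 * t * (β + 1))) ^ 2 + 1)
      - (1 - t ^ 2) / (2 * t * (β + 1))) - t) / (1 - t ^ 2))
    + (1 / 2) * Real.log ((1 - (Real.sqrt (((1 - t ^ 2) / (2 * t * (β + 1))) ^ 2 + 1)
      - (1 - t ^ 2) / (2 * t * (β + 1))) ^ 2) / (1 - t ^ 2))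


namespace GwigAux
open scoped NNReal

theorem lintegral_fin_prod {m : ℕ} {E : Fin m → Type*} [∀ i, MeasurableSpace (E i)]
    (μ : ∀ i, Measure (E i)) [∀ i, SigmaFinite (μ i)]
    {f : ∀ i, E i → ℝ≥0∞} (hf : ∀ i, Measurable (f i)) :
    ∫⁻ x, ∏ i, f i (x i) ∂Measure.pi μ = ∏ i, ∫⁻ y, f i y ∂μ i := by
  induction m with
  | zero => simp
  | succ m ih =>
    have h1 := measurePreserving_piFinSuccAbove μ 0
    have hg : Measurable (fun y : E 0 × (∀ j : Fin m, E ((0 : Fin (m+1)).succAbove j)) =>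
        f 0 y.1 * ∏ j, f ((0 : Fin (m+1)).succAbove j) (y.2 j)) :=
      ((hf 0).comp measurable_fst).mul
        (Finset.measurable_prod _ fun j _ => (hf _).comp ((measurable_pi_apply j).comp measurable_snd))
    have := h1.lintegral_comp hg
    have heq : ∀ x : ∀ i, E i,
        f 0 (x 0) * ∏ j, f ((0 : Fin (m+1)).succAbove j) (x ((0 : Fin (m+1)).succAbove j))
          = ∏ i, f i (x i) := by
      intro x
      rw [Fin.prod_univ_succ]
      simp [Fin.succAbove_zero]
    calc ∫⁻ x, ∏ i, f i (x i) ∂Measure.pi μ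
        = ∫⁻ x, f 0 (x 0) * ∏ j, f ((0 : Fin (m+1)).succAbove j) (x ((0:Fin (m+1)).succAbove j)) ∂Measure.pi μ := by
          simp_rw [heq]
      _ = ∫⁻ y, f 0 y.1 * ∏ j, f ((0 : Fin (m+1)).succAbove j) (y.2 j)
            ∂((μ 0).prod (Measure.pi fun j => μ ((0 : Fin (m+1)).succAbove j))) := by
          rw [← h1.lintegral_comp hg]; rfl
      _ = (∫⁻ y, f 0 y ∂μ 0) * ∏ j, ∫⁻ y, f ((0 : Fin (m+1)).succAbove j) y ∂μ _ := by
          have hgm : Measurable (fun y : ∀ j : Fin m, E ((0 : Fin (m+1)).succAbove j) =>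
              ∏ j, f ((0 : Fin (m+1)).succAbove j) (y j)) :=
            Finset.measurable_prod _ fun j _ => (hf _).comp (measurable_pi_apply j)
          rw [lintegral_prod_mul (hf 0).aemeasurable hgm.aemeasurable,
            ih (fun j => μ ((0 : Fin (m+1)).succAbove j)) (fun j => hf _)]
      _ = ∏ i, ∫⁻ y, f i y ∂μ i := by rw [Fin.prod_univ_succ]; simp [Fin.zero_succAbove]; rfl

theorem lintegral_fintype_prod {ι : Type*} [Fintype ι] {E : ι → Type*} [∀ i, MeasurableSpace (E i)]
    (μ : ∀ i, Measure (E i)) [∀ i, SigmaFinite (μ i)]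
    {f : ∀ i, E i → ℝ≥0∞} (hf : ∀ i, Measurable (f i)) :
    ∫⁻ x, ∏ i, f i (x i) ∂Measure.pi μ = ∏ i, ∫⁻ y, f i y ∂μ i := by
  let e := (Fintype.equivFin ι).symm
  have h1 := measurePreserving_piCongrLeft μ e
  have hg : Measurable (fun x : ∀ i, E i => ∏ i, f i (x i)) :=
    Finset.measurable_prod _ fun i _ => (hf i).comp (measurable_pi_apply i)
  rw [← h1.lintegral_comp hg]
  have : ∀ y : ∀ i', E (e i'), ∏ i, f i ((MeasurableEquiv.piCongrLeft E e) y i)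
      = ∏ i', f (e i') (y i') := by
    intro y
    rw [← e.prod_comp]
    refine Finset.prod_congr rfl fun i' _ => ?_
    rw [MeasurableEquiv.coe_piCongrLeft, Equiv.piCongrLeft_apply_apply]
  simp_rw [this]
  rw [lintegral_fin_prod _ (fun i' => hf (e i')), ← e.prod_comp]

theorem pi_map_coord {ι : Type*} [Fintype ι] (μ : ι → Measure ℝ) [∀ i, IsProbabilityMeasure (μ i)]
    {f : ι → ℝ → ℝ} (hf : ∀ i, Measurable (f i)) :
    (Measure.pi μ).map (fun g i => f i (g i)) = Measure.pi (fun i => (μ i).map (f i)) := by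
  haveI : ∀ i, IsProbabilityMeasure ((μ i).map (f i)) :=
    fun i => Measure.isProbabilityMeasure_map (hf i).aemeasurable
  have hmeas : Measurable fun (g : ι → ℝ) (i : ι) => f i (g i) :=
    measurable_pi_lambda _ fun i => (hf i).comp (measurable_pi_apply i)
  symm
  refine Measure.pi_eq fun s hs => ?_
  rw [Measure.map_apply hmeas (MeasurableSet.univ_pi hs)]
  have : (fun g (i : ι) => f i (g i)) ⁻¹' Set.pi Set.univ s = Set.pi Set.univ (fun i => f i ⁻¹' s i) := by
    ext g; simp [Set.mem_pi]
  rw [this, Measure.pi_pi]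
  exact Finset.prod_congr rfl fun i _ => (Measure.map_apply (hf i) (hs i)).symm

theorem pi_withDensity {ι : Type*} [Fintype ι] (μ : ι → Measure ℝ) [∀ i, IsProbabilityMeasure (μ i)]
    {g : ι → ℝ → ℝ≥0∞} (hg : ∀ i, Measurable (g i))
    [∀ i, SigmaFinite ((μ i).withDensity (g i))] :
    (Measure.pi μ).withDensity (fun x => ∏ i, g i (x i))
      = Measure.pi (fun i => (μ i).withDensity (g i)) := by
  symm
  refine Measure.pi_eq fun s hs => ?_
  rw [withDensity_apply _ (MeasurableSet.univ_pi hs)]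
  have h1 : ∫⁻ x in Set.pi Set.univ s, ∏ i, g i (x i) ∂Measure.pi μ
      = ∫⁻ x, ∏ i, (s i).indicator (g i) (x i) ∂Measure.pi μ := by
    rw [← lintegral_indicator (MeasurableSet.univ_pi hs)]
    congr 1; funext x
    by_cases hx : x ∈ Set.pi Set.univ s
    · rw [Set.indicator_of_mem hx]
      exact Finset.prod_congr rfl fun i _ => (Set.indicator_of_mem (hx i trivial) _).symm
    · rw [Set.indicator_of_notMem hx]
      simp only [Set.mem_pi, Set.mem_univ, forall_true_left, not_forall] at hx
      obtain ⟨i, hi⟩ := hx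
      exact (Finset.prod_eq_zero (Finset.mem_univ i)
        (by rw [Set.indicator_of_notMem (by simpa using hi)])).symm
  rw [h1, lintegral_fintype_prod _ (fun i => (hg i).indicator (hs i))]
  exact Finset.prod_congr rfl fun i _ => by
    rw [lintegral_indicator (hs i), withDensity_apply _ (hs i)]

theorem withDensity_map_comm {α β : Type*} [MeasurableSpace α] [MeasurableSpace β]
    (μ : Measure α) {f : α → β} (hf : Measurable f) {g : β → ℝ≥0∞} (hg : Measurable g) :
    (μ.withDensity (fun a => g (f a))).map f = (μ.map f).withDensity g := by
  ext A hA
  rw [Measure.map_apply hf hA, withDensity_apply _ (hf hA), withDensity_apply _ hA,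
    Measure.restrict_map hf hA, lintegral_map hg hf]

theorem measurable_gratio (m : ℝ) (v : ℝ≥0) :
    Measurable fun y : ℝ => ENNReal.ofReal (Real.exp (m * y / v - m ^ 2 / (2 * v))) := by
  fun_prop

theorem gaussian_shift_withDensity {v : ℝ≥0} (hv : v ≠ 0) (m : ℝ) :
    (gaussianReal 0 v).map (fun y => m + y)
      = (gaussianReal 0 v).withDensity
          (fun y => ENNReal.ofReal (Real.exp (m * y / v - m ^ 2 / (2 * v)))) := by
  have hvr : (v : ℝ) ≠ 0 := by exact_mod_cast hv
  rw [show (fun y : ℝ => m + y) = (m + ·) from rfl, gaussianReal_map_const_add, zero_add,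
    gaussianReal_of_var_ne_zero m hv, gaussianReal_of_var_ne_zero 0 hv,
    ← withDensity_mul _ (measurable_gaussianPDF 0 v) (measurable_gratio m v)]
  congr 1
  funext y
  simp only [Pi.mul_apply, gaussianPDF]
  rw [← ENNReal.ofReal_mul (gaussianPDFReal_nonneg 0 v y)]
  congr 1
  unfold gaussianPDFReal
  symm
  rw [mul_assoc, ← Real.exp_add]
  congr 1
  field_simp
  ring

theorem lintegral_gaussian_exp {v : ℝ≥0} (hv : v ≠ 0) (a b : ℝ) :
    ∫⁻ y, ENNReal.ofReal (Real.exp (a * y + b)) ∂gaussianReal 0 v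
      = ENNReal.ofReal (Real.exp ((v : ℝ) * a ^ 2 / 2 + b)) := by
  have hvr : (v : ℝ) ≠ 0 := by exact_mod_cast hv
  have hm : Measurable fun y : ℝ => ENNReal.ofReal (Real.exp (a * y + b)) := by fun_prop
  rw [gaussianReal_of_var_ne_zero 0 hv,
    lintegral_withDensity_eq_lintegral_mul _ (measurable_gaussianPDF 0 v) hm]
  have key : ∀ y, gaussianPDF 0 v y * ENNReal.ofReal (Real.exp (a * y + b))
      = ENNReal.ofReal (Real.exp ((v : ℝ) * a ^ 2 / 2 + b)) * gaussianPDF ((v : ℝ) * a) v y := by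
    intro y
    simp only [gaussianPDF]
    rw [← ENNReal.ofReal_mul (gaussianPDFReal_nonneg 0 v y),
      ← ENNReal.ofReal_mul (Real.exp_nonneg _)]
    congr 1
    unfold gaussianPDFReal
    have hexp : -(y - 0) ^ 2 / (2 * (v : ℝ)) + (a * y + b)
        = ((v : ℝ) * a ^ 2 / 2 + b) + -(y - (v : ℝ) * a) ^ 2 / (2 * (v : ℝ)) := by
      field_simp
      ring
    calc (Real.sqrt (2 * Real.pi * v))⁻¹ * Real.exp (-(y - 0) ^ 2 / (2 * v)) * Real.exp (a * y + b)
        = (Real.sqrt (2 * Real.pi * v))⁻¹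
            * Real.exp (-(y - 0) ^ 2 / (2 * (v : ℝ)) + (a * y + b)) := by
          rw [mul_assoc, ← Real.exp_add]
      _ = (Real.sqrt (2 * Real.pi * v))⁻¹
            * (Real.exp ((v : ℝ) * a ^ 2 / 2 + b) * Real.exp (-(y - (v : ℝ) * a) ^ 2 / (2 * (v:ℝ)))) := by
          rw [hexp, Real.exp_add]
      _ = Real.exp ((v : ℝ) * a ^ 2 / 2 + b)
            * ((Real.sqrt (2 * Real.pi * v))⁻¹ * Real.exp (-(y - (v : ℝ) * a) ^ 2 / (2 * v))) := by
          ring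
  simp only [Pi.mul_apply]
  simp_rw [key]
  rw [lintegral_const_mul _ (measurable_gaussianPDF _ v), lintegral_gaussianPDF_eq_one _ hv, mul_one]

theorem lintegral_gratio_mul {v : ℝ≥0} (hv : v ≠ 0) (m m' : ℝ) :
    ∫⁻ y, ENNReal.ofReal (Real.exp (m * y / v - m ^ 2 / (2 * v)))
        * ENNReal.ofReal (Real.exp (m' * y / v - m' ^ 2 / (2 * v))) ∂gaussianReal 0 v
      = ENNReal.ofReal (Real.exp (m * m' / v)) := by
  have hvr : (v : ℝ) ≠ 0 := by exact_mod_cast hv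
  have h1 : ∀ y : ℝ, ENNReal.ofReal (Real.exp (m * y / v - m ^ 2 / (2 * v)))
        * ENNReal.ofReal (Real.exp (m' * y / v - m' ^ 2 / (2 * v)))
      = ENNReal.ofReal (Real.exp (((m + m') / v) * y + (-(m ^ 2 + m' ^ 2) / (2 * v)))) := by
    intro y
    rw [← ENNReal.ofReal_mul (Real.exp_nonneg _), ← Real.exp_add]
    congr 2
    field_simp
    ring
  simp_rw [h1]
  rw [lintegral_gaussian_exp hv]
  congr 2
  field_simp
  ring
abbrev UP (n : ℕ) := {p : Fin n × Fin n // p.1 ≤ p.2}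

/-- variance of the scaled noise entry indexed by `u`. -/
def vnn (n : ℕ) (u : UP n) : ℝ≥0 := (if u.1.1 = u.1.2 then 2 else 1) / (n : ℝ≥0)

lemma vnn_ne_zero {n : ℕ} (u : UP n) : vnn n u ≠ 0 := by
  have hn : 0 < n := u.1.1.pos
  unfold vnn
  refine div_ne_zero ?_ ?_
  · split <;> norm_num
  · exact_mod_cast hn.ne'

/-- reference product measure on upper-triangular coordinates. -/
def refMeas (n : ℕ) : Measure (UP n → ℝ) := Measure.pi fun u => gaussianReal 0 (vnn n u)

instance (n : ℕ) : IsProbabilityMeasure (refMeas n) := by unfold refMeas; infer_instance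

/-- symmetrization map from upper-triangular coordinates to matrices. -/
def jmap (n : ℕ) (h : UP n → ℝ) (i j : Fin n) : ℝ :=
  if hij : i ≤ j then h ⟨(i, j), hij⟩ else h ⟨(j, i), le_of_not_ge hij⟩

lemma measurable_jmap (n : ℕ) : Measurable (jmap n) := by
  refine measurable_pi_lambda _ fun i => measurable_pi_lambda _ fun j => ?_
  by_cases hij : i ≤ j
  · simpa [jmap, hij] using measurable_pi_apply (⟨(i, j), hij⟩ : UP n)
  · simpa [jmap, hij] using measurable_pi_apply (⟨(j, i), le_of_not_ge hij⟩ : UP n)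

lemma gauss_scale {n : ℕ} (hn : 0 < n) (w : ℝ≥0) :
    (gaussianReal 0 w).map (fun y => (Real.sqrt n)⁻¹ * y) = gaussianReal 0 (w / n) := by
  rw [show (fun y : ℝ => (Real.sqrt n)⁻¹ * y) = ((Real.sqrt n)⁻¹ * ·) from rfl,
    gaussianReal_map_const_mul, mul_zero]
  congr 1
  apply NNReal.coe_injective
  rw [NNReal.coe_mul, NNReal.coe_div, NNReal.coe_natCast]
  show ((Real.sqrt n)⁻¹) ^ 2 * (w : ℝ) = (w : ℝ) / n
  rw [inv_pow, Real.sq_sqrt (Nat.cast_nonneg n), inv_mul_eq_div]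

lemma measurable_symmetrize (n : ℕ) :
    Measurable (fun (g : Fin n × Fin n → ℝ) (i j : Fin n) => if i ≤ j then g (i, j) else g (j, i)) := by
  refine measurable_pi_lambda _ fun i => measurable_pi_lambda _ fun j => ?_
  by_cases hij : i ≤ j
  · simpa [hij] using measurable_pi_apply ((i, j) : Fin n × Fin n)
  · simpa [hij] using measurable_pi_apply ((j, i) : Fin n × Fin n)

lemma measurable_restrict_scale (n : ℕ) :
    Measurable (fun (g : Fin n × Fin n → ℝ) (u : UP n) => (Real.sqrt n)⁻¹ * g u.1) :=
  measurable_pi_lambda _ fun u => (measurable_pi_apply u.1).const_mul _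

lemma pi_base_map (n : ℕ) :
    ((Measure.pi fun p : Fin n × Fin n =>
        if p.1 = p.2 then gaussianReal 0 2 else gaussianReal 0 1).map
      (fun g (u : UP n) => (Real.sqrt n)⁻¹ * g u.1)) = refMeas n := by
  haveI hprob : ∀ p : Fin n × Fin n,
      IsProbabilityMeasure (if p.1 = p.2 then gaussianReal 0 2 else gaussianReal 0 1 : Measure ℝ) :=
    fun p => by split <;> infer_instance
  have hsplit : (fun (g : Fin n × Fin n → ℝ) (u : UP n) => (Real.sqrt n)⁻¹ * g u.1)
      = (fun (h : UP n → ℝ) (u : UP n) => (Real.sqrt n)⁻¹ * h u)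
        ∘ (fun (g : Fin n × Fin n → ℝ) (u : UP n) => g u.1) := rfl
  have hrestr : Measurable (fun (g : Fin n × Fin n → ℝ) (u : UP n) => g u.1) :=
    measurable_pi_lambda _ fun u => measurable_pi_apply u.1
  have hscale : Measurable (fun (h : UP n → ℝ) (u : UP n) => (Real.sqrt n)⁻¹ * h u) :=
    measurable_pi_lambda _ fun u => (measurable_pi_apply u).const_mul _
  rw [hsplit, ← Measure.map_map hscale hrestr]
  have hres : (Measure.pi fun p : Fin n × Fin n =>
        if p.1 = p.2 then gaussianReal 0 2 else gaussianReal 0 1).map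
        (fun g (u : UP n) => g u.1)
      = Measure.pi (fun u : UP n =>
          if u.1.1 = u.1.2 then gaussianReal 0 2 else gaussianReal 0 1) := by
    have h1 := (measurePreserving_piEquivPiSubtypeProd
      (α := fun _ : Fin n × Fin n => ℝ)
      (fun p : Fin n × Fin n => if p.1 = p.2 then gaussianReal 0 2 else gaussianReal 0 1)
      (fun p : Fin n × Fin n => p.1 ≤ p.2)).map_eq
    have h2 : (fun (g : Fin n × Fin n → ℝ) (u : UP n) => g u.1)
        = Prod.fst ∘ (MeasurableEquiv.piEquivPiSubtypeProd (fun _ : Fin n × Fin n => ℝ)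
            (fun p : Fin n × Fin n => p.1 ≤ p.2)) := rfl
    rw [h2, ← Measure.map_map measurable_fst (MeasurableEquiv.measurable _), h1,
      Measure.map_fst_prod, measure_univ, one_smul]
  rw [hres, pi_map_coord (f := fun (_ : UP n) (y : ℝ) => (Real.sqrt n)⁻¹ * y) _
    (fun _ => measurable_id.const_mul _)]
  unfold refMeas
  refine congrArg Measure.pi (funext fun u => ?_)
  have hn : 0 < n := u.1.1.pos
  unfold vnn
  split_ifs with h
  · exact gauss_scale hn 2
  · exact gauss_scale hn 1

lemma GWig0_eq (n : ℕ) : GWig0 n = (refMeas n).map (jmap n) := by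
  have hscaleM : Measurable (fun (W : Fin n → Fin n → ℝ) (i j : Fin n) => (Real.sqrt n)⁻¹ * W i j) := by
    refine measurable_pi_lambda _ fun i => measurable_pi_lambda _ fun j => ?_
    have hev : Measurable fun W : Fin n → Fin n → ℝ => W i j :=
      (measurable_pi_apply j).comp (measurable_pi_apply i)
    exact hev.const_mul _
  rw [GWig0, unspikedWigner, wignerNoise, Measure.map_map hscaleM (measurable_symmetrize n)]
  have key : ((fun (W : Fin n → Fin n → ℝ) (i j : Fin n) => (Real.sqrt n)⁻¹ * W i j)
        ∘ (fun (g : Fin n × Fin n → ℝ) (i j : Fin n) => if i ≤ j then g (i, j) else g (j, i)))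
      = jmap n ∘ (fun (g : Fin n × Fin n → ℝ) (u : UP n) => (Real.sqrt n)⁻¹ * g u.1) := by
    funext g i j
    simp only [Function.comp_apply, jmap]
    split_ifs with h <;> rfl
  rw [key, ← Measure.map_map (measurable_jmap n) (measurable_restrict_scale n), pi_base_map]

section Density

variable {n : ℕ} {lam : ℝ}

lemma measurable_shift (n : ℕ) (lam : ℝ) :
    Measurable (fun (q : EuclideanSpace ℝ (Fin n) × (UP n → ℝ)) (u : UP n) =>
      lam * (q.1 u.1.1 * q.1 u.1.2) + q.2 u) := by
  refine measurable_pi_lambda _ fun u => ?_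
  have h1 : Measurable fun q : EuclideanSpace ℝ (Fin n) × (UP n → ℝ) => q.1 u.1.1 :=
    (measurable_pi_apply u.1.1).comp ((WithLp.measurable_ofLp _ _).comp measurable_fst)
  have h2 : Measurable fun q : EuclideanSpace ℝ (Fin n) × (UP n → ℝ) => q.1 u.1.2 :=
    (measurable_pi_apply u.1.2).comp ((WithLp.measurable_ofLp _ _).comp measurable_fst)
  have h3 : Measurable fun q : EuclideanSpace ℝ (Fin n) × (UP n → ℝ) => q.2 u :=
    (measurable_pi_apply u).comp measurable_snd
  exact (((h1.mul h2).const_mul lam).add h3)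

lemma GWig_eq (n : ℕ) (lam : ℝ) (μ : Measure (EuclideanSpace ℝ (Fin n)))
    [IsProbabilityMeasure μ] :
    GWig lam μ = ((μ.prod (refMeas n)).map
        (fun q (u : UP n) => lam * (q.1 u.1.1 * q.1 u.1.2) + q.2 u)).map (jmap n) := by
  have hFM : Measurable (fun (q : EuclideanSpace ℝ (Fin n) × (Fin n → Fin n → ℝ)) (i j : Fin n) =>
      lam * (q.1 i * q.1 j) + (Real.sqrt n)⁻¹ * q.2 i j) := by
    refine measurable_pi_lambda _ fun i => measurable_pi_lambda _ fun j => ?_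
    have h1 : Measurable fun q : EuclideanSpace ℝ (Fin n) × (Fin n → Fin n → ℝ) => q.1 i :=
      (measurable_pi_apply i).comp ((WithLp.measurable_ofLp _ _).comp measurable_fst)
    have h2 : Measurable fun q : EuclideanSpace ℝ (Fin n) × (Fin n → Fin n → ℝ) => q.1 j :=
      (measurable_pi_apply j).comp ((WithLp.measurable_ofLp _ _).comp measurable_fst)
    have h3 : Measurable fun q : EuclideanSpace ℝ (Fin n) × (Fin n → Fin n → ℝ) => q.2 i j := by
      have hev : Measurable fun W : Fin n → Fin n → ℝ => W i j :=
        (measurable_pi_apply j).comp (measurable_pi_apply i)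
      exact hev.comp measurable_snd
    exact ((h1.mul h2).const_mul lam).add (h3.const_mul _)
  haveI : ∀ p : Fin n × Fin n,
      IsProbabilityMeasure (if p.1 = p.2 then gaussianReal 0 2 else gaussianReal 0 1 : Measure ℝ) :=
    fun p => by split <;> infer_instance
  rw [GWig, spikedWigner, wignerNoise]
  rw [show μ.prod ((Measure.pi fun p : Fin n × Fin n =>
        if p.1 = p.2 then gaussianReal 0 2 else gaussianReal 0 1).map
        (fun g (i j : Fin n) => if i ≤ j then g (i, j) else g (j, i)))
      = (μ.prod (Measure.pi fun p : Fin n × Fin n =>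
          if p.1 = p.2 then gaussianReal 0 2 else gaussianReal 0 1)).map
        (Prod.map id (fun g (i j : Fin n) => if i ≤ j then g (i, j) else g (j, i))) from by
    rw [← Measure.map_prod_map _ _ measurable_id (measurable_symmetrize n), Measure.map_id]]
  rw [Measure.map_map hFM (measurable_id.prodMap (measurable_symmetrize n))]
  have key : ((fun (q : EuclideanSpace ℝ (Fin n) × (Fin n → Fin n → ℝ)) (i j : Fin n) =>
        lam * (q.1 i * q.1 j) + (Real.sqrt n)⁻¹ * q.2 i j)
        ∘ (Prod.map id (fun g (i j : Fin n) => if i ≤ j then g (i, j) else g (j, i))))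
      = jmap n ∘ ((fun (q : EuclideanSpace ℝ (Fin n) × (UP n → ℝ)) (u : UP n) =>
          lam * (q.1 u.1.1 * q.1 u.1.2) + q.2 u)
        ∘ (Prod.map id (fun (g : Fin n × Fin n → ℝ) (u : UP n) => (Real.sqrt n)⁻¹ * g u.1))) := by
    funext q i j
    simp only [Function.comp_apply, Prod.map_fst, Prod.map_snd, id_eq, jmap]
    split_ifs with h
    · rfl
    · ring
  rw [key, ← Measure.map_map (measurable_jmap n)
    ((measurable_shift n lam).comp (measurable_id.prodMap (measurable_restrict_scale n))),
    ← Measure.map_map (measurable_shift n lam) (measurable_id.prodMap (measurable_restrict_scale n)),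
    ← Measure.map_prod_map _ _ measurable_id (measurable_restrict_scale n), Measure.map_id,
    pi_base_map]

/-- the one-coordinate Gaussian likelihood ratio. -/
def gratio (m : ℝ) (v : ℝ≥0) (y : ℝ) : ℝ≥0∞ :=
  ENNReal.ofReal (Real.exp (m * y / v - m ^ 2 / (2 * v)))

/-- the likelihood ratio on upper-triangular coordinates. -/
def Lfun (n : ℕ) (lam : ℝ) (x : EuclideanSpace ℝ (Fin n)) (h : UP n → ℝ) : ℝ≥0∞ :=
  ∏ u : UP n, gratio (lam * (x u.1.1 * x u.1.2)) (vnn n u) (h u)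

lemma measurable_Lfun_pair (n : ℕ) (lam : ℝ) :
    Measurable (fun q : EuclideanSpace ℝ (Fin n) × (UP n → ℝ) => Lfun n lam q.1 q.2) := by
  unfold Lfun gratio
  refine Finset.measurable_prod _ fun u _ => Measurable.ennreal_ofReal ?_
  have h1 : Measurable fun q : EuclideanSpace ℝ (Fin n) × (UP n → ℝ) => q.1 u.1.1 :=
    (measurable_pi_apply u.1.1).comp ((WithLp.measurable_ofLp _ _).comp measurable_fst)
  have h2 : Measurable fun q : EuclideanSpace ℝ (Fin n) × (UP n → ℝ) => q.1 u.1.2 :=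
    (measurable_pi_apply u.1.2).comp ((WithLp.measurable_ofLp _ _).comp measurable_fst)
  have h3 : Measurable fun q : EuclideanSpace ℝ (Fin n) × (UP n → ℝ) => q.2 u :=
    (measurable_pi_apply u).comp measurable_snd
  apply Measurable.exp
  exact ((((h1.mul h2).const_mul lam).mul h3).div_const _).sub
    ((((h1.mul h2).const_mul lam).pow_const 2).div_const _)

lemma shift_map_eq_withDensity (n : ℕ) (lam : ℝ) (x : EuclideanSpace ℝ (Fin n)) :
    (refMeas n).map (fun h (u : UP n) => lam * (x u.1.1 * x u.1.2) + h u)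
      = (refMeas n).withDensity (Lfun n lam x) := by
  unfold refMeas
  rw [pi_map_coord (f := fun (u : UP n) (y : ℝ) => lam * (x u.1.1 * x u.1.2) + y) _
    (fun _ => measurable_id.const_add _)]
  have heach : ∀ u : UP n,
      (gaussianReal 0 (vnn n u)).map (fun y => lam * (x u.1.1 * x u.1.2) + y)
        = (gaussianReal 0 (vnn n u)).withDensity
            (fun y => gratio (lam * (x u.1.1 * x u.1.2)) (vnn n u) y) :=
    fun u => gaussian_shift_withDensity (vnn_ne_zero u) _
  haveI hsf : ∀ u : UP n, SigmaFinite ((gaussianReal 0 (vnn n u)).withDensity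
      (fun y => gratio (lam * (x u.1.1 * x u.1.2)) (vnn n u) y)) := by
    intro u
    rw [← heach u]
    haveI := Measure.isProbabilityMeasure_map
      (μ := gaussianReal 0 (vnn n u))
      (f := fun y => lam * (x u.1.1 * x u.1.2) + y)
      (measurable_id.const_add _).aemeasurable
    infer_instance
  calc Measure.pi (fun u : UP n =>
        (gaussianReal 0 (vnn n u)).map (fun y => lam * (x u.1.1 * x u.1.2) + y))
      = Measure.pi (fun u : UP n => (gaussianReal 0 (vnn n u)).withDensity
          (fun y => gratio (lam * (x u.1.1 * x u.1.2)) (vnn n u) y)) := by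
        exact congrArg _ (funext heach)
    _ = (Measure.pi fun u : UP n => gaussianReal 0 (vnn n u)).withDensity
          (fun h => ∏ u : UP n, gratio (lam * (x u.1.1 * x u.1.2)) (vnn n u) (h u)) :=
        (pi_withDensity _ (fun u => measurable_gratio _ _)).symm
    _ = (Measure.pi fun u : UP n => gaussianReal 0 (vnn n u)).withDensity (Lfun n lam x) := rfl

lemma prod_shift_withDensity (n : ℕ) (lam : ℝ) (μ : Measure (EuclideanSpace ℝ (Fin n)))
    [IsProbabilityMeasure μ] :
    (μ.prod (refMeas n)).map (fun q (u : UP n) => lam * (q.1 u.1.1 * q.1 u.1.2) + q.2 u)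
      = (refMeas n).withDensity (fun h => ∫⁻ x, Lfun n lam x h ∂μ) := by
  ext A hA
  rw [Measure.map_apply (measurable_shift n lam) hA,
    Measure.prod_apply ((measurable_shift n lam) hA), withDensity_apply _ hA]
  calc ∫⁻ x, (refMeas n) (Prod.mk x ⁻¹'
        ((fun (q : EuclideanSpace ℝ (Fin n) × (UP n → ℝ)) (u : UP n) =>
          lam * (q.1 u.1.1 * q.1 u.1.2) + q.2 u) ⁻¹' A)) ∂μ
      = ∫⁻ x, ∫⁻ h in A, Lfun n lam x h ∂refMeas n ∂μ := by
        refine lintegral_congr fun x => ?_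
        have hsect : Prod.mk x ⁻¹'
            ((fun (q : EuclideanSpace ℝ (Fin n) × (UP n → ℝ)) (u : UP n) =>
              lam * (q.1 u.1.1 * q.1 u.1.2) + q.2 u) ⁻¹' A)
            = (fun (h : UP n → ℝ) (u : UP n) => lam * (x u.1.1 * x u.1.2) + h u) ⁻¹' A := rfl
        have haddM : Measurable (fun (h : UP n → ℝ) (u : UP n) => lam * (x u.1.1 * x u.1.2) + h u) :=
          measurable_pi_lambda _ fun u => (measurable_pi_apply u).const_add _
        rw [hsect, ← Measure.map_apply haddM hA, shift_map_eq_withDensity n lam x,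
          withDensity_apply _ hA]
    _ = ∫⁻ h in A, ∫⁻ x, Lfun n lam x h ∂μ ∂refMeas n := by
        exact lintegral_lintegral_swap (measurable_Lfun_pair n lam).aemeasurable

/-- the density of `GWig lam μ` with respect to `GWig0 n`. -/
def Dfull (n : ℕ) (lam : ℝ) (μ : Measure (EuclideanSpace ℝ (Fin n)))
    (Y : Fin n → Fin n → ℝ) : ℝ≥0∞ :=
  ∫⁻ x, ∏ u : UP n, gratio (lam * (x u.1.1 * x u.1.2)) (vnn n u) (Y u.1.1 u.1.2) ∂μ

lemma measurable_Dfull (n : ℕ) (lam : ℝ) (μ : Measure (EuclideanSpace ℝ (Fin n)))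
    [IsProbabilityMeasure μ] : Measurable (Dfull n lam μ) := by
  have hjoint : Measurable (fun p : EuclideanSpace ℝ (Fin n) × (Fin n → Fin n → ℝ) =>
      ∏ u : UP n, gratio (lam * (p.1 u.1.1 * p.1 u.1.2)) (vnn n u) (p.2 u.1.1 u.1.2)) := by
    unfold gratio
    refine Finset.measurable_prod _ fun u _ => Measurable.ennreal_ofReal ?_
    have h1 : Measurable fun q : EuclideanSpace ℝ (Fin n) × (Fin n → Fin n → ℝ) => q.1 u.1.1 :=
      (measurable_pi_apply u.1.1).comp ((WithLp.measurable_ofLp _ _).comp measurable_fst)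
    have h2 : Measurable fun q : EuclideanSpace ℝ (Fin n) × (Fin n → Fin n → ℝ) => q.1 u.1.2 :=
      (measurable_pi_apply u.1.2).comp ((WithLp.measurable_ofLp _ _).comp measurable_fst)
    have h3 : Measurable fun q : EuclideanSpace ℝ (Fin n) × (Fin n → Fin n → ℝ) =>
        q.2 u.1.1 u.1.2 := by
      have hev : Measurable fun W : Fin n → Fin n → ℝ => W u.1.1 u.1.2 :=
        (measurable_pi_apply u.1.2).comp (measurable_pi_apply u.1.1)
      exact hev.comp measurable_snd
    apply Measurable.exp
    exact ((((h1.mul h2).const_mul lam).mul h3).div_const _).sub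
      ((((h1.mul h2).const_mul lam).pow_const 2).div_const _)
  exact Measurable.lintegral_prod_left' hjoint

lemma Dfull_jmap (n : ℕ) (lam : ℝ) (μ : Measure (EuclideanSpace ℝ (Fin n))) (h : UP n → ℝ) :
    Dfull n lam μ (jmap n h) = ∫⁻ x, Lfun n lam x h ∂μ := by
  unfold Dfull Lfun
  refine lintegral_congr fun x => Finset.prod_congr rfl fun u _ => ?_
  have hyu : jmap n h u.1.1 u.1.2 = h u := by
    unfold jmap
    rw [dif_pos u.2]
  rw [hyu]

set_option maxHeartbeats 1600000 in
lemma GWig_withDensity (n : ℕ) (lam : ℝ) (μ : Measure (EuclideanSpace ℝ (Fin n)))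
    [IsProbabilityMeasure μ] :
    GWig lam μ = (GWig0 n).withDensity (Dfull n lam μ) := by
  rw [GWig_eq n lam μ, prod_shift_withDensity n lam μ, GWig0_eq n,
    ← withDensity_map_comm _ (measurable_jmap n) (measurable_Dfull n lam μ)]
  congr 1
  exact congrArg ((refMeas n).withDensity) (funext fun h => (Dfull_jmap n lam μ h).symm)

end Density

lemma measurable_gratio2 (m : ℝ) (v : ℝ≥0) : Measurable (gratio m v) := by
  unfold gratio; exact measurable_gratio m v

lemma lintegral_gratio_mul' {v : ℝ≥0} (hv : v ≠ 0) (m m' : ℝ) :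
    ∫⁻ y, gratio m v y * gratio m' v y ∂gaussianReal 0 v
      = ENNReal.ofReal (Real.exp (m * m' / v)) := by
  unfold gratio
  exact lintegral_gratio_mul hv m m'

lemma measurable_Lfun_left (n : ℕ) (lam : ℝ) (h : UP n → ℝ) :
    Measurable fun x : EuclideanSpace ℝ (Fin n) => Lfun n lam x h := by
  unfold Lfun gratio
  refine Finset.measurable_prod _ fun u _ => Measurable.ennreal_ofReal ?_
  have h1 : Measurable fun x : EuclideanSpace ℝ (Fin n) => x u.1.1 := (measurable_pi_apply _).comp (WithLp.measurable_ofLp _ _)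
  have h2 : Measurable fun x : EuclideanSpace ℝ (Fin n) => x u.1.2 := (measurable_pi_apply _).comp (WithLp.measurable_ofLp _ _)
  apply Measurable.exp
  exact ((((h1.mul h2).const_mul lam).mul_const _).div_const _).sub
    ((((h1.mul h2).const_mul lam).pow_const 2).div_const _)

lemma measurable_L2 (n : ℕ) (lam : ℝ) :
    Measurable (fun z : (UP n → ℝ) × (EuclideanSpace ℝ (Fin n) × EuclideanSpace ℝ (Fin n)) =>
      Lfun n lam z.2.1 z.1 * Lfun n lam z.2.2 z.1) := by
  unfold Lfun gratio
  have key : ∀ (sel : (EuclideanSpace ℝ (Fin n) × EuclideanSpace ℝ (Fin n)) → EuclideanSpace ℝ (Fin n)),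
      Measurable sel →
      Measurable (fun z : (UP n → ℝ) × (EuclideanSpace ℝ (Fin n) × EuclideanSpace ℝ (Fin n)) =>
        ∏ u : UP n, ENNReal.ofReal (Real.exp (lam * (sel z.2 u.1.1 * sel z.2 u.1.2) * z.1 u
          / (vnn n u : ℝ) - (lam * (sel z.2 u.1.1 * sel z.2 u.1.2)) ^ 2 / (2 * (vnn n u : ℝ))))) := by
    intro sel hsel
    refine Finset.measurable_prod _ fun u _ => Measurable.ennreal_ofReal ?_
    have h1 : Measurable fun z : (UP n → ℝ) × (EuclideanSpace ℝ (Fin n) × EuclideanSpace ℝ (Fin n)) =>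
        sel z.2 u.1.1 := (measurable_pi_apply u.1.1).comp ((WithLp.measurable_ofLp _ _).comp (hsel.comp measurable_snd))
    have h2 : Measurable fun z : (UP n → ℝ) × (EuclideanSpace ℝ (Fin n) × EuclideanSpace ℝ (Fin n)) =>
        sel z.2 u.1.2 := (measurable_pi_apply u.1.2).comp ((WithLp.measurable_ofLp _ _).comp (hsel.comp measurable_snd))
    have h3 : Measurable fun z : (UP n → ℝ) × (EuclideanSpace ℝ (Fin n) × EuclideanSpace ℝ (Fin n)) =>
        z.1 u := (measurable_pi_apply u).comp measurable_fst
    apply Measurable.exp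
    exact ((((h1.mul h2).const_mul lam).mul h3).div_const _).sub
      ((((h1.mul h2).const_mul lam).pow_const 2).div_const _)
  exact (key Prod.fst measurable_fst).mul (key Prod.snd measurable_snd)

section Algebra

lemma sum_up_weight (n : ℕ) (a : Fin n → ℝ) :
    ∑ u : UP n, (if u.1.1 = u.1.2 then (1 : ℝ) else 2) * (a u.1.1 * a u.1.2)
      = (∑ i, a i) ^ 2 := by
  classical
  have hsub : ∑ u : UP n, (if u.1.1 = u.1.2 then (1 : ℝ) else 2) * (a u.1.1 * a u.1.2)
      = ∑ p ∈ Finset.univ.filter (fun p : Fin n × Fin n => p.1 ≤ p.2),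
          (if p.1 = p.2 then (1 : ℝ) else 2) * (a p.1 * a p.2) :=
    (Finset.sum_subtype (Finset.univ.filter (fun p : Fin n × Fin n => p.1 ≤ p.2))
      (fun p => by simp)
      (fun p : Fin n × Fin n => (if p.1 = p.2 then (1 : ℝ) else 2) * (a p.1 * a p.2))).symm
  rw [hsub, sq, Finset.sum_mul_sum, ← Finset.sum_product']
  have hsplit := Finset.sum_filter_add_sum_filter_not (Finset.univ ×ˢ Finset.univ)
    (fun p : Fin n × Fin n => p.1 ≤ p.2) (fun p : Fin n × Fin n => a p.1 * a p.2)
  have huniv : (Finset.univ ×ˢ Finset.univ : Finset (Fin n × Fin n)) = Finset.univ :=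
    Finset.univ_product_univ
  rw [huniv] at hsplit
  have hswap : ∑ p ∈ Finset.univ.filter (fun p : Fin n × Fin n => ¬p.1 ≤ p.2), a p.1 * a p.2
      = ∑ p ∈ Finset.univ.filter (fun p : Fin n × Fin n => p.1 < p.2), a p.1 * a p.2 := by
    refine Finset.sum_bij' (fun p _ => Prod.swap p) (fun p _ => Prod.swap p) ?_ ?_ ?_ ?_ ?_
    · intro p hp
      simp only [Finset.mem_filter, Finset.mem_univ, true_and, not_le] at hp ⊢
      exact hp
    · intro p hp
      simp only [Finset.mem_filter, Finset.mem_univ, true_and, not_le] at hp ⊢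
      exact hp
    · intro p _; exact Prod.swap_swap p
    · intro p _; exact Prod.swap_swap p
    · intro p _; exact mul_comm _ _
  have hdiag : (Finset.univ.filter (fun p : Fin n × Fin n => p.1 ≤ p.2)).filter
      (fun p : Fin n × Fin n => ¬p.1 = p.2) = Finset.univ.filter (fun p : Fin n × Fin n => p.1 < p.2) := by
    ext p
    simp only [Finset.mem_filter, Finset.mem_univ, true_and, and_comm]
    constructor
    · rintro ⟨hne, hle⟩; exact lt_of_le_of_ne hle hne
    · intro hlt; exact ⟨hlt.ne, hlt.le⟩
  have hW : ∑ p ∈ Finset.univ.filter (fun p : Fin n × Fin n => p.1 ≤ p.2),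
        (if p.1 = p.2 then (1 : ℝ) else 2) * (a p.1 * a p.2)
      = (∑ p ∈ Finset.univ.filter (fun p : Fin n × Fin n => p.1 ≤ p.2), a p.1 * a p.2)
        + ∑ p ∈ Finset.univ.filter (fun p : Fin n × Fin n => p.1 < p.2), a p.1 * a p.2 := by
    rw [← hdiag]
    rw [← Finset.sum_filter_add_sum_filter_not
      (Finset.univ.filter (fun p : Fin n × Fin n => p.1 ≤ p.2))
      (fun p : Fin n × Fin n => p.1 = p.2)
      (fun p : Fin n × Fin n => (if p.1 = p.2 then (1 : ℝ) else 2) * (a p.1 * a p.2)),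
      ← Finset.sum_filter_add_sum_filter_not
      (Finset.univ.filter (fun p : Fin n × Fin n => p.1 ≤ p.2))
      (fun p : Fin n × Fin n => p.1 = p.2)
      (fun p : Fin n × Fin n => a p.1 * a p.2)]
    have e1 : ∑ p ∈ (Finset.univ.filter (fun p : Fin n × Fin n => p.1 ≤ p.2)).filter
          (fun p : Fin n × Fin n => p.1 = p.2),
          (if p.1 = p.2 then (1 : ℝ) else 2) * (a p.1 * a p.2)
        = ∑ p ∈ (Finset.univ.filter (fun p : Fin n × Fin n => p.1 ≤ p.2)).filter
          (fun p : Fin n × Fin n => p.1 = p.2), a p.1 * a p.2 := by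
      refine Finset.sum_congr rfl fun p hp => ?_
      rw [if_pos (Finset.mem_filter.mp hp).2, one_mul]
    have e2 : ∑ p ∈ (Finset.univ.filter (fun p : Fin n × Fin n => p.1 ≤ p.2)).filter
          (fun p : Fin n × Fin n => ¬p.1 = p.2),
          (if p.1 = p.2 then (1 : ℝ) else 2) * (a p.1 * a p.2)
        = ∑ p ∈ (Finset.univ.filter (fun p : Fin n × Fin n => p.1 ≤ p.2)).filter
          (fun p : Fin n × Fin n => ¬p.1 = p.2), (a p.1 * a p.2 + a p.1 * a p.2) := by
      refine Finset.sum_congr rfl fun p hp => ?_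
      rw [if_neg (Finset.mem_filter.mp hp).2, two_mul]
    rw [e1, e2, Finset.sum_add_distrib]
    ring
  rw [hW, ← hswap, hsplit, huniv]

lemma vnn_coe {n : ℕ} (u : UP n) :
    (vnn n u : ℝ) = (if u.1.1 = u.1.2 then (2 : ℝ) else 1) / (n : ℝ) := by
  unfold vnn
  rw [NNReal.coe_div, NNReal.coe_natCast]
  congr 1
  split <;> norm_num

lemma sum_coef (n : ℕ) (lam : ℝ) (x x' : EuclideanSpace ℝ (Fin n)) :
    ∑ u : UP n, lam * (x u.1.1 * x u.1.2) * (lam * (x' u.1.1 * x' u.1.2)) / (vnn n u : ℝ)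
      = (n : ℝ) * lam ^ 2 / 2 * (inner ℝ x x' : ℝ) ^ 2 := by
  classical
  have hterm : ∀ u : UP n,
      lam * (x u.1.1 * x u.1.2) * (lam * (x' u.1.1 * x' u.1.2)) / (vnn n u : ℝ)
        = (n : ℝ) * lam ^ 2 / 2 * ((if u.1.1 = u.1.2 then (1 : ℝ) else 2)
            * ((x u.1.1 * x' u.1.1) * (x u.1.2 * x' u.1.2))) := by
    intro u
    have hn : 0 < n := u.1.1.pos
    have hn0 : (n : ℝ) ≠ 0 := by exact_mod_cast hn.ne'
    rw [vnn_coe u]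
    split_ifs with h
    · rw [h]; field_simp
    · field_simp
  have hinner : (inner ℝ x x' : ℝ) = ∑ i, x i * x' i := by
    simp [PiLp.inner_apply, RCLike.inner_apply, mul_comm]
  rw [Finset.sum_congr rfl fun u _ => hterm u, ← Finset.mul_sum,
    sum_up_weight n (fun i => x i * x' i), hinner]

end Algebra

end GwigAux

set_option maxHeartbeats 1000000 in
/-- **Proposition 3.4.** For the spiked Gaussian Wigner model `Q_n = GWig(λ, X)` and the
unspiked model `P_n = GWig(0)`, the second moment equals `E_{x,x'} exp((nλ²/2)⟨x,x'⟩²)`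
(as an identity in `[0,∞]`). -/
theorem gwig_second_moment (lam : ℝ) (hlam : 0 ≤ lam) (X : SpikePrior) (n : ℕ) :
    ∫⁻ Y, ((GWig lam (X.μ n)).rnDeriv (GWig0 n) Y) ^ 2 ∂(GWig0 n)
      = wignerSecondMoment X.μ lam n := by
  classical
  haveI := X.isProb n
  set μ := X.μ n with hμ
  haveI : IsProbabilityMeasure (GWig0 n) := by
    rw [GwigAux.GWig0_eq n]
    exact Measure.isProbabilityMeasure_map (GwigAux.measurable_jmap n).aemeasurable
  have hD := GwigAux.measurable_Dfull n lam μ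
  have h1 : ∫⁻ Y, ((GWig lam μ).rnDeriv (GWig0 n) Y) ^ 2 ∂(GWig0 n)
      = ∫⁻ Y, (GwigAux.Dfull n lam μ Y) ^ 2 ∂(GWig0 n) := by
    have hae := Measure.rnDeriv_withDensity (GWig0 n) hD
    rw [GwigAux.GWig_withDensity n lam μ]
    exact lintegral_congr_ae (hae.mono fun Y hY => by dsimp only; rw [hY])
  rw [h1, GwigAux.GWig0_eq n, lintegral_map (hD.pow_const 2) (GwigAux.measurable_jmap n)]
  have hLx : ∀ h : GwigAux.UP n → ℝ,
      Measurable fun x : EuclideanSpace ℝ (Fin n) => GwigAux.Lfun n lam x h :=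
    GwigAux.measurable_Lfun_left n lam
  have hjoint := GwigAux.measurable_L2 n lam
  calc ∫⁻ h, (GwigAux.Dfull n lam μ (GwigAux.jmap n h)) ^ 2 ∂GwigAux.refMeas n
      = ∫⁻ h, ∫⁻ p, GwigAux.Lfun n lam p.1 h * GwigAux.Lfun n lam p.2 h
          ∂(μ.prod μ) ∂GwigAux.refMeas n := by
        refine lintegral_congr fun h => ?_
        rw [GwigAux.Dfull_jmap n lam μ h, pow_two,
          lintegral_prod_mul (hLx h).aemeasurable (hLx h).aemeasurable]
    _ = ∫⁻ p, ∫⁻ h, GwigAux.Lfun n lam p.1 h * GwigAux.Lfun n lam p.2 h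
          ∂GwigAux.refMeas n ∂(μ.prod μ) :=
        lintegral_lintegral_swap hjoint.aemeasurable
    _ = ∫⁻ p, ENNReal.ofReal (Real.exp (∑ u : GwigAux.UP n,
          lam * (p.1 u.1.1 * p.1 u.1.2) * (lam * (p.2 u.1.1 * p.2 u.1.2))
            / (GwigAux.vnn n u : ℝ))) ∂(μ.prod μ) := by
        refine lintegral_congr fun p => ?_
        unfold GwigAux.Lfun GwigAux.refMeas
        simp_rw [← Finset.prod_mul_distrib]
        rw [GwigAux.lintegral_fintype_prod (fun u => gaussianReal 0 (GwigAux.vnn n u))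
            (f := fun (u : GwigAux.UP n) (y : ℝ) =>
              GwigAux.gratio (lam * (p.1 u.1.1 * p.1 u.1.2)) (GwigAux.vnn n u) y
                * GwigAux.gratio (lam * (p.2 u.1.1 * p.2 u.1.2)) (GwigAux.vnn n u) y)
            (fun u => (GwigAux.measurable_gratio2 _ _).mul (GwigAux.measurable_gratio2 _ _))]
        rw [Finset.prod_congr rfl fun u _ =>
          GwigAux.lintegral_gratio_mul' (GwigAux.vnn_ne_zero u)
            (lam * (p.1 u.1.1 * p.1 u.1.2)) (lam * (p.2 u.1.1 * p.2 u.1.2))]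
        rw [← ENNReal.ofReal_prod_of_nonneg (fun u _ => (Real.exp_nonneg _)), ← Real.exp_sum]
    _ = wignerSecondMoment X.μ lam n := by
        unfold wignerSecondMoment
        refine lintegral_congr fun p => ?_
        rw [GwigAux.sum_coef n lam p.1 p.2]

end
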